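/- (Theorem 1, iterate form.) Let Ṽ₀ : ℝ^k → ℝ be an arbitrary bounded function, define V₀ : Δ(S) → ℝ by V₀(b) = Ṽ₀(A b), and define inductively Ṽ_{t+1} = H̃ Ṽ_t and V_{t+1} = H V_t. Then for every t ∈ ℕ and every b ∈ Δ(S) one has Ṽ_t(A b) ≤ V_t(b); that is, value iteration with the abstract operator H̃ over characteristic vectors always lower-bounds value iteration with the exact operator H over beliefs. -/

import Mathlib

open Finset Matrix

section POSG

variable {S A1 A2 O : Type*} [Fintype S] [Fintype A1] [Fintype A2] [Fintype O]

/-- Expected immediate reward `E_{b,π₁,π₂}[R]`. -/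
def expReward (R : S → A1 → A2 → ℝ) (b : S → ℝ) (π1 : A1 → ℝ) (π2 : S → A2 → ℝ) : ℝ :=
  ∑ s, ∑ a1, ∑ a2, b s * π1 a1 * π2 s a2 * R s a1 a2

/-- `Pr_{b,π₁,π₂}[a₁,o]`, the probability that player 1 plays `a1` and observes `o`. -/
def prObs (T : O → S → S → A1 → A2 → ℝ) (b : S → ℝ) (π1 : A1 → ℝ) (π2 : S → A2 → ℝ)
    (a1 : A1) (o : O) : ℝ :=
  π1 a1 * ∑ s, ∑ a2, ∑ s', b s * π2 s a2 * T o s' s a1 a2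

/-- Bayesian belief update `τ(b,a₁,π₂,o)`. -/
noncomputable def beliefUpd (T : O → S → S → A1 → A2 → ℝ) (b : S → ℝ) (π2 : S → A2 → ℝ)
    (a1 : A1) (o : O) : S → ℝ := fun s' =>
  (∑ s, ∑ a2, b s * π2 s a2 * T o s' s a1 a2) /
    (∑ s'', ∑ s, ∑ a2, b s * π2 s a2 * T o s'' s a1 a2)

/-- Value of the stage game under stage strategies `π₁, π₂` with continuation values `V`. -/
noncomputable def stageVal (T : O → S → S → A1 → A2 → ℝ) (R : S → A1 → A2 → ℝ) (γ : ℝ)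
    (V : (S → ℝ) → ℝ) (b : S → ℝ) (π1 : A1 → ℝ) (π2 : S → A2 → ℝ) : ℝ :=
  expReward R b π1 π2 + γ * ∑ a1, ∑ o,
    if 0 < prObs T b π1 π2 a1 o then
      prObs T b π1 π2 a1 o * V (beliefUpd T b π2 a1 o)
    else 0

/-- The exact Bellman (stage-game) operator `H` over beliefs. -/
noncomputable def Hop (T : O → S → S → A1 → A2 → ℝ) (R : S → A1 → A2 → ℝ) (γ : ℝ)
    (V : (S → ℝ) → ℝ) (b : S → ℝ) : ℝ :=
  ⨅ π2 : {π2 : S → A2 → ℝ // ∀ s, π2 s ∈ stdSimplex ℝ A2},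
    ⨆ π1 : {π1 : A1 → ℝ // π1 ∈ stdSimplex ℝ A1},
      stageVal T R γ V b π1.1 π2.1

/-- The abstract stage-game operator `H̃` over characteristic vectors. -/
noncomputable def Habs {k : ℕ} (T : O → S → S → A1 → A2 → ℝ) (R : S → A1 → A2 → ℝ) (γ : ℝ)
    (A : Matrix (Fin k) S ℝ) (W : (Fin k → ℝ) → ℝ) (χ : Fin k → ℝ) : ℝ :=
  ⨅ b : {b : S → ℝ // b ∈ stdSimplex ℝ S ∧ A.mulVec b = χ},
    ⨅ π2 : {π2 : S → A2 → ℝ // ∀ s, π2 s ∈ stdSimplex ℝ A2},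
      ⨆ π1 : {π1 : A1 → ℝ // π1 ∈ stdSimplex ℝ A1},
        stageVal T R γ (fun b' => W (A.mulVec b')) b.1 π1.1 π2.1

end POSG

section aux
open Finset Matrix
variable {S A1 A2 O : Type*} [Fintype S] [Fintype A1] [Fintype A2] [Fintype O]

lemma uniform_mem_stdSimplex' [Nonempty S] :
    (fun _ : S => (Fintype.card S : ℝ)⁻¹) ∈ stdSimplex ℝ S := by
  refine ⟨fun _ => by positivity, ?_⟩
  rw [Finset.sum_const, Finset.card_univ, nsmul_eq_mul, mul_inv_cancel₀]
  exact_mod_cast Fintype.card_ne_zero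

lemma mem_stdSimplex_le_one {b : S → ℝ} (hb : b ∈ stdSimplex ℝ S) (s : S) : b s ≤ 1 := by
  rw [← hb.2]
  exact Finset.single_le_sum (fun i _ => hb.1 i) (Finset.mem_univ s)

lemma prObs_nonneg' (T : O → S → S → A1 → A2 → ℝ) (b : S → ℝ) (π1 : A1 → ℝ) (π2 : S → A2 → ℝ)
    (hT : ∀ o s' s a1 a2, 0 ≤ T o s' s a1 a2)
    (hb : ∀ s, 0 ≤ b s) (hπ1 : ∀ a, 0 ≤ π1 a) (hπ2 : ∀ s a, 0 ≤ π2 s a) (a1 : A1) (o : O) :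
    0 ≤ prObs T b π1 π2 a1 o := by
  refine mul_nonneg (hπ1 a1) ?_
  refine Finset.sum_nonneg fun s _ => Finset.sum_nonneg fun a2 _ =>
    Finset.sum_nonneg fun s' _ => ?_
  exact mul_nonneg (mul_nonneg (hb s) (hπ2 s a2)) (hT o s' s a1 a2)

lemma prObs_sum_eq_one (T : O → S → S → A1 → A2 → ℝ) (b : S → ℝ) (π1 : A1 → ℝ) (π2 : S → A2 → ℝ)
    (hTsum : ∀ s a1 a2, ∑ o, ∑ s', T o s' s a1 a2 = 1)
    (hb : b ∈ stdSimplex ℝ S) (hπ1 : π1 ∈ stdSimplex ℝ A1) (hπ2 : ∀ s, π2 s ∈ stdSimplex ℝ A2) :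
    ∑ a1, ∑ o, prObs T b π1 π2 a1 o = 1 := by
  have key : ∀ a1 : A1, ∑ o, ∑ s, ∑ a2, ∑ s', b s * π2 s a2 * T o s' s a1 a2 = 1 := by
    intro a1
    rw [Finset.sum_comm]
    have h1 : ∀ s : S, ∑ o, ∑ a2, ∑ s', b s * π2 s a2 * T o s' s a1 a2
        = b s * ∑ a2, π2 s a2 := by
      intro s
      rw [Finset.sum_comm, Finset.mul_sum]
      refine Finset.sum_congr rfl fun a2 _ => ?_
      have h2 : ∑ o, ∑ s', b s * π2 s a2 * T o s' s a1 a2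
          = b s * π2 s a2 * ∑ o, ∑ s', T o s' s a1 a2 := by
        simp [Finset.mul_sum]
      rw [h2, hTsum, mul_one]
    calc ∑ s, ∑ o, ∑ a2, ∑ s', b s * π2 s a2 * T o s' s a1 a2
        = ∑ s, b s * ∑ a2, π2 s a2 := Finset.sum_congr rfl fun s _ => h1 s
      _ = ∑ s, b s := by
          refine Finset.sum_congr rfl fun s _ => ?_
          rw [(hπ2 s).2, mul_one]
      _ = 1 := hb.2
  calc ∑ a1, ∑ o, prObs T b π1 π2 a1 o
      = ∑ a1, π1 a1 := by
        refine Finset.sum_congr rfl fun a1 _ => ?_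
        unfold prObs
        rw [← Finset.mul_sum, key a1, mul_one]
    _ = 1 := hπ1.2

lemma beliefUpd_mem (T : O → S → S → A1 → A2 → ℝ) (b : S → ℝ) (π1 : A1 → ℝ) (π2 : S → A2 → ℝ)
    (a1 : A1) (o : O)
    (hT : ∀ o s' s a1 a2, 0 ≤ T o s' s a1 a2)
    (hb : b ∈ stdSimplex ℝ S) (hπ1 : ∀ a, 0 ≤ π1 a) (hπ2 : ∀ s, π2 s ∈ stdSimplex ℝ A2)
    (hpos : 0 < prObs T b π1 π2 a1 o) :
    beliefUpd T b π2 a1 o ∈ stdSimplex ℝ S := by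
  set D := ∑ s'', ∑ s, ∑ a2, b s * π2 s a2 * T o s'' s a1 a2 with hD
  have hterm : ∀ s'' s a2, 0 ≤ b s * π2 s a2 * T o s'' s a1 a2 := fun s'' s a2 =>
    mul_nonneg (mul_nonneg (hb.1 s) ((hπ2 s).1 a2)) (hT o s'' s a1 a2)
  have hDnn : 0 ≤ D :=
    Finset.sum_nonneg fun s'' _ => Finset.sum_nonneg fun s _ =>
      Finset.sum_nonneg fun a2 _ => hterm s'' s a2
  have hrearr : (∑ s, ∑ a2, ∑ s', b s * π2 s a2 * T o s' s a1 a2) = D := by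
    rw [hD]
    calc ∑ s, ∑ a2, ∑ s', b s * π2 s a2 * T o s' s a1 a2
        = ∑ s, ∑ s', ∑ a2, b s * π2 s a2 * T o s' s a1 a2 :=
          Finset.sum_congr rfl fun s _ => Finset.sum_comm
      _ = ∑ s'', ∑ s, ∑ a2, b s * π2 s a2 * T o s'' s a1 a2 := Finset.sum_comm
  have hDpos : 0 < D := by
    rcases lt_or_eq_of_le hDnn with h | h
    · exact h
    · exfalso
      have : prObs T b π1 π2 a1 o = 0 := by
        unfold prObs
        rw [hrearr, ← h, mul_zero]
      linarith
  constructor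
  · intro s'
    refine div_nonneg ?_ hDnn
    exact Finset.sum_nonneg fun s _ => Finset.sum_nonneg fun a2 _ => hterm s' s a2
  · unfold beliefUpd
    rw [← Finset.sum_div, div_eq_one_iff_eq (ne_of_gt hDpos)]

lemma abs_stageVal_le (T : O → S → S → A1 → A2 → ℝ) (R : S → A1 → A2 → ℝ) (γ : ℝ)
    (V : (S → ℝ) → ℝ) (b : S → ℝ) (π1 : A1 → ℝ) (π2 : S → A2 → ℝ) (C : ℝ)
    (hT : ∀ o s' s a1 a2, 0 ≤ T o s' s a1 a2)
    (hTsum : ∀ s a1 a2, ∑ o, ∑ s', T o s' s a1 a2 = 1) (hγ0 : 0 ≤ γ)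
    (hb : b ∈ stdSimplex ℝ S) (hπ1 : π1 ∈ stdSimplex ℝ A1) (hπ2 : ∀ s, π2 s ∈ stdSimplex ℝ A2)
    (hV : ∀ b' ∈ stdSimplex ℝ S, |V b'| ≤ C) :
    |stageVal T R γ V b π1 π2| ≤ (∑ s, ∑ a1, ∑ a2, |R s a1 a2|) + γ * C := by
  have hC : 0 ≤ C := le_trans (abs_nonneg _) (hV b hb)
  have h1 : |expReward R b π1 π2| ≤ ∑ s, ∑ a1, ∑ a2, |R s a1 a2| := by
    unfold expReward
    refine le_trans (Finset.abs_sum_le_sum_abs _ _) (Finset.sum_le_sum fun s _ => ?_)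
    refine le_trans (Finset.abs_sum_le_sum_abs _ _) (Finset.sum_le_sum fun a1 _ => ?_)
    refine le_trans (Finset.abs_sum_le_sum_abs _ _) (Finset.sum_le_sum fun a2 _ => ?_)
    rw [abs_mul, abs_mul, abs_mul]
    rw [abs_of_nonneg (hb.1 s), abs_of_nonneg (hπ1.1 a1), abs_of_nonneg ((hπ2 s).1 a2)]
    calc b s * π1 a1 * π2 s a2 * |R s a1 a2| ≤ 1 * 1 * 1 * |R s a1 a2| := by
          refine mul_le_mul_of_nonneg_right ?_ (abs_nonneg _)
          refine mul_le_mul ?_ (mem_stdSimplex_le_one (hπ2 s) a2) ((hπ2 s).1 a2) (by norm_num)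
          refine mul_le_mul (mem_stdSimplex_le_one hb s) (mem_stdSimplex_le_one hπ1 a1)
            (hπ1.1 a1) (by linarith [mem_stdSimplex_le_one hb s, hb.1 s])
      _ = |R s a1 a2| := by ring
  have h2 : |∑ a1, ∑ o, if 0 < prObs T b π1 π2 a1 o then
      prObs T b π1 π2 a1 o * V (beliefUpd T b π2 a1 o) else 0| ≤ C := by
    have hsum : ∑ a1, ∑ o, prObs T b π1 π2 a1 o = 1 :=
      prObs_sum_eq_one T b π1 π2 hTsum hb hπ1 hπ2
    calc |∑ a1, ∑ o, if 0 < prObs T b π1 π2 a1 o then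
        prObs T b π1 π2 a1 o * V (beliefUpd T b π2 a1 o) else 0|
        ≤ ∑ a1, ∑ o, prObs T b π1 π2 a1 o * C := by
          refine le_trans (Finset.abs_sum_le_sum_abs _ _) (Finset.sum_le_sum fun a1 _ => ?_)
          refine le_trans (Finset.abs_sum_le_sum_abs _ _) (Finset.sum_le_sum fun o _ => ?_)
          by_cases hp : 0 < prObs T b π1 π2 a1 o
          · rw [if_pos hp, abs_mul, abs_of_nonneg (le_of_lt hp)]
            exact mul_le_mul_of_nonneg_left
              (hV _ (beliefUpd_mem T b π1 π2 a1 o hT hb hπ1.1 hπ2 hp)) (le_of_lt hp)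
          · rw [if_neg hp, abs_zero]
            exact mul_nonneg (prObs_nonneg' T b π1 π2 hT hb.1 hπ1.1 (fun s a => (hπ2 s).1 a) a1 o) hC
      _ = C := by
          simp only [← Finset.sum_mul]
          rw [hsum, one_mul]
  calc |stageVal T R γ V b π1 π2|
      ≤ |expReward R b π1 π2| + |γ * ∑ a1, ∑ o, if 0 < prObs T b π1 π2 a1 o then
          prObs T b π1 π2 a1 o * V (beliefUpd T b π2 a1 o) else 0| := abs_add_le _ _
    _ ≤ (∑ s, ∑ a1, ∑ a2, |R s a1 a2|) + γ * C := by
        refine add_le_add h1 ?_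
        rw [abs_mul, abs_of_nonneg hγ0]
        exact mul_le_mul_of_nonneg_left h2 hγ0

lemma stageVal_mono (T : O → S → S → A1 → A2 → ℝ) (R : S → A1 → A2 → ℝ) (γ : ℝ)
    (V V' : (S → ℝ) → ℝ) (b : S → ℝ) (π1 : A1 → ℝ) (π2 : S → A2 → ℝ)
    (hT : ∀ o s' s a1 a2, 0 ≤ T o s' s a1 a2) (hγ0 : 0 ≤ γ)
    (hb : b ∈ stdSimplex ℝ S) (hπ1 : ∀ a, 0 ≤ π1 a) (hπ2 : ∀ s, π2 s ∈ stdSimplex ℝ A2)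
    (h : ∀ b' ∈ stdSimplex ℝ S, V b' ≤ V' b') :
    stageVal T R γ V b π1 π2 ≤ stageVal T R γ V' b π1 π2 := by
  unfold stageVal
  refine add_le_add (le_refl _) (mul_le_mul_of_nonneg_left ?_ hγ0)
  refine Finset.sum_le_sum fun a1 _ => Finset.sum_le_sum fun o _ => ?_
  by_cases hp : 0 < prObs T b π1 π2 a1 o
  · rw [if_pos hp, if_pos hp]
    exact mul_le_mul_of_nonneg_left (h _ (beliefUpd_mem T b π1 π2 a1 o hT hb hπ1 hπ2 hp))
      (le_of_lt hp)
  · rw [if_neg hp, if_neg hp]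

lemma abs_ciInf_le {ι : Sort*} [Nonempty ι] (f : ι → ℝ) (B : ℝ) (h : ∀ i, |f i| ≤ B) :
    |⨅ i, f i| ≤ B := by
  rw [abs_le]
  constructor
  · exact le_ciInf fun i => (abs_le.1 (h i)).1
  · exact ciInf_le_of_le ⟨-B, by rintro x ⟨i, rfl⟩; exact (abs_le.1 (h i)).1⟩
      (Classical.arbitrary ι) (abs_le.1 (h _)).2

lemma abs_ciSup_le {ι : Sort*} [Nonempty ι] (f : ι → ℝ) (B : ℝ) (h : ∀ i, |f i| ≤ B) :
    |⨆ i, f i| ≤ B := by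
  rw [abs_le]
  constructor
  · exact le_ciSup_of_le ⟨B, by rintro x ⟨i, rfl⟩; exact (abs_le.1 (h i)).2⟩
      (Classical.arbitrary ι) (abs_le.1 (h _)).1
  · exact ciSup_le fun i => (abs_le.1 (h i)).2

end aux
/-- Theorem 1, iterate form: abstract value iteration with `H̃` always
lower-bounds exact value iteration with `H`. -/
theorem abstract_value_iteration_lower_bounds
    {S A1 A2 O : Type*} [Fintype S] [Fintype A1] [Fintype A2] [Fintype O]
    [Nonempty S] [Nonempty A1] [Nonempty A2] [Nonempty O] {k : ℕ}
    (T : O → S → S → A1 → A2 → ℝ) (R : S → A1 → A2 → ℝ) (γ : ℝ)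
    (hT : ∀ o s' s a1 a2, 0 ≤ T o s' s a1 a2)
    (hTsum : ∀ s a1 a2, ∑ o, ∑ s', T o s' s a1 a2 = 1)
    (hγ0 : 0 ≤ γ) (hγ1 : γ < 1)
    (A : Matrix (Fin k) S ℝ)
    (W0 : (Fin k → ℝ) → ℝ) (hW0 : ∃ C, ∀ χ, |W0 χ| ≤ C)
    (Wt : ℕ → (Fin k → ℝ) → ℝ) (Vt : ℕ → (S → ℝ) → ℝ)
    (hWt0 : Wt 0 = W0) (hVt0 : ∀ b, Vt 0 b = W0 (A.mulVec b))
    (hWtS : ∀ t, Wt (t + 1) = Habs T R γ A (Wt t))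
    (hVtS : ∀ t, Vt (t + 1) = Hop T R γ (Vt t)) :
    ∀ t : ℕ, ∀ b ∈ stdSimplex ℝ S, Wt t (A.mulVec b) ≤ Vt t b := by
  haveI hne1 : Nonempty {π1 : A1 → ℝ // π1 ∈ stdSimplex ℝ A1} :=
    ⟨⟨_, uniform_mem_stdSimplex'⟩⟩
  haveI hne2 : Nonempty {π2 : S → A2 → ℝ // ∀ s, π2 s ∈ stdSimplex ℝ A2} :=
    ⟨⟨fun _ _ => (Fintype.card A2 : ℝ)⁻¹, fun _ => uniform_mem_stdSimplex'⟩⟩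
  obtain ⟨C0, hC0⟩ := hW0
  suffices H : ∀ t, ∃ C, (∀ b ∈ stdSimplex ℝ S, |Wt t (A.mulVec b)| ≤ C ∧ |Vt t b| ≤ C) ∧
      (∀ b ∈ stdSimplex ℝ S, Wt t (A.mulVec b) ≤ Vt t b) by
    intro t b hb
    obtain ⟨C, _, hle⟩ := H t
    exact hle b hb
  intro t
  induction t with
  | zero =>
    refine ⟨C0, fun b _ => ⟨by rw [hWt0]; exact hC0 _, by rw [hVt0]; exact hC0 _⟩,
      fun b _ => ?_⟩
    rw [hWt0, hVt0]
  | succ t ih =>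
    obtain ⟨C, hCbd, hle⟩ := ih
    set MR := ∑ s, ∑ a1, ∑ a2, |R s a1 a2| with hMR
    set B := MR + γ * C with hB
    have hWbd : ∀ b' ∈ stdSimplex ℝ S, |(fun b'' => Wt t (A.mulVec b'')) b'| ≤ C :=
      fun b' hb' => (hCbd b' hb').1
    have hVbd : ∀ b' ∈ stdSimplex ℝ S, |Vt t b'| ≤ C := fun b' hb' => (hCbd b' hb').2
    -- uniform bound on stage values with the abstract continuation
    have hstW : ∀ (b' : S → ℝ), b' ∈ stdSimplex ℝ S →
        ∀ (π1 : {π1 : A1 → ℝ // π1 ∈ stdSimplex ℝ A1})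
          (π2 : {π2 : S → A2 → ℝ // ∀ s, π2 s ∈ stdSimplex ℝ A2}),
        |stageVal T R γ (fun b'' => Wt t (A.mulVec b'')) b' π1.1 π2.1| ≤ B :=
      fun b' hb' π1 π2 =>
        abs_stageVal_le T R γ _ b' π1.1 π2.1 C hT hTsum hγ0 hb' π1.2 π2.2 hWbd
    -- uniform bound on stage values with the exact continuation
    have hstV : ∀ (b' : S → ℝ), b' ∈ stdSimplex ℝ S →
        ∀ (π1 : {π1 : A1 → ℝ // π1 ∈ stdSimplex ℝ A1})
          (π2 : {π2 : S → A2 → ℝ // ∀ s, π2 s ∈ stdSimplex ℝ A2}),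
        |stageVal T R γ (Vt t) b' π1.1 π2.1| ≤ B :=
      fun b' hb' π1 π2 =>
        abs_stageVal_le T R γ _ b' π1.1 π2.1 C hT hTsum hγ0 hb' π1.2 π2.2 hVbd
    refine ⟨B, fun b hb => ⟨?_, ?_⟩, fun b hb => ?_⟩
    · -- bound on Wt (t+1)
      rw [hWtS]
      unfold Habs
      haveI : Nonempty {b' : S → ℝ // b' ∈ stdSimplex ℝ S ∧ A.mulVec b' = A.mulVec b} :=
        ⟨⟨b, hb, rfl⟩⟩
      exact abs_ciInf_le _ B fun b' =>
        abs_ciInf_le _ B fun π2 => abs_ciSup_le _ B fun π1 => hstW b'.1 b'.2.1 π1 π2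
    · -- bound on Vt (t+1)
      rw [hVtS]
      unfold Hop
      exact abs_ciInf_le _ B fun π2 => abs_ciSup_le _ B fun π1 => hstV b hb π1 π2
    · -- the main inequality
      rw [hWtS, hVtS]
      unfold Habs Hop
      haveI : Nonempty {b' : S → ℝ // b' ∈ stdSimplex ℝ S ∧ A.mulVec b' = A.mulVec b} :=
        ⟨⟨b, hb, rfl⟩⟩
      have hBddG : BddBelow (Set.range fun b' :
          {b' : S → ℝ // b' ∈ stdSimplex ℝ S ∧ A.mulVec b' = A.mulVec b} =>
          ⨅ π2 : {π2 : S → A2 → ℝ // ∀ s, π2 s ∈ stdSimplex ℝ A2},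
            ⨆ π1 : {π1 : A1 → ℝ // π1 ∈ stdSimplex ℝ A1},
              stageVal T R γ (fun b'' => Wt t (A.mulVec b'')) b'.1 π1.1 π2.1) := by
        refine ⟨-B, ?_⟩
        rintro x ⟨b', rfl⟩
        exact (abs_le.1 (abs_ciInf_le _ B fun π2 =>
          abs_ciSup_le _ B fun π1 => hstW b'.1 b'.2.1 π1 π2)).1
      refine ciInf_le_of_le hBddG ⟨b, hb, rfl⟩ ?_
      refine ciInf_mono ?_ fun π2 => ?_
      · refine ⟨-B, ?_⟩
        rintro x ⟨π2, rfl⟩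
        exact (abs_le.1 (abs_ciSup_le _ B fun π1 => hstW b hb π1 π2)).1
      · refine ciSup_le fun π1 => ?_
        refine le_trans (stageVal_mono T R γ _ _ b π1.1 π2.1 hT hγ0 hb π1.2.1 π2.2 hle) ?_
        refine le_ciSup (f := fun π1' : {π1 : A1 → ℝ // π1 ∈ stdSimplex ℝ A1} =>
          stageVal T R γ (Vt t) b π1'.1 π2.1) ⟨B, ?_⟩ π1
        rintro x ⟨π1', rfl⟩
        exact (abs_le.1 (hstV b hb π1' π2)).2
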